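/- Let G be a simple graph with minimum degree δ, let v be a node of G and t ∈ ℕ. If N_t(v) ≠ ∅ (some node is at graph distance exactly t from v), then the t-neighborhood of v satisfies |N̂_t(v)| ≥ (t−1)·δ/3; indeed |N̂_t(v)| ≥ ⌊(t+1)/3⌋·(δ+1). -/

import Mathlib

open Finset
open scoped Classical

/-- Along a geodesic: intermediate vertices at every distance. -/
lemma exists_intermediate_edist {V : Type*} (G : SimpleGraph V) {v u : V} {t : ℕ}
    (h : G.edist v u = (t : ℕ∞)) {i : ℕ} (hi : i ≤ t) :
    ∃ w : V, G.edist v w = (i : ℕ∞) ∧ G.edist w u = ((t - i : ℕ) : ℕ∞) := by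
  induction i with
  | zero => exact ⟨v, G.edist_self, by simpa using h⟩
  | succ i ih =>
    obtain ⟨w, hvw, hwu⟩ := ih (Nat.le_of_succ_le hi)
    obtain ⟨p, hp⟩ := SimpleGraph.exists_walk_of_edist_eq_coe hwu
    have hplen : p.length = t - i := hp
    have hnn : ¬ p.Nil := by
      rw [SimpleGraph.Walk.nil_iff_length_eq, hplen]
      omega
    set w' := p.getVert 1 with hw'
    have hadj : G.Adj w w' := p.adj_snd hnn
    have htail : p.tail.length + 1 = p.length := SimpleGraph.Walk.length_tail_add_one hnn
    have h1 : G.edist v w' ≤ ((i + 1 : ℕ) : ℕ∞) := by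
      calc G.edist v w' ≤ G.edist v w + G.edist w w' := G.edist_triangle
        _ ≤ (i : ℕ∞) + 1 := by
            rw [hvw, SimpleGraph.edist_eq_one_iff_adj.mpr hadj]
        _ = ((i + 1 : ℕ) : ℕ∞) := by push_cast; ring
    have h2 : G.edist w' u ≤ ((t - (i + 1) : ℕ) : ℕ∞) := by
      have := p.tail.edist_le
      have hlen : p.tail.length = t - (i + 1) := by omega
      rwa [hlen] at this
    obtain ⟨a, ha, hale⟩ := ENat.le_coe_iff.mp h1
    obtain ⟨b, hb, hble⟩ := ENat.le_coe_iff.mp h2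
    have h3 : (t : ℕ∞) ≤ (a : ℕ∞) + (b : ℕ∞) := by
      rw [← ha, ← hb, ← h]; exact G.edist_triangle
    have h3' : t ≤ a + b := by exact_mod_cast h3
    have hae : a = i + 1 := by omega
    have hbe : b = t - (i + 1) := by omega
    exact ⟨w', by rw [ha, hae], by rw [hb, hbe]⟩

/-- If some node is at graph distance exactly `t` from `v` in a graph with
minimum degree `δ`, then the `t`-neighborhood of `v` has at least `⌊(t+1)/3⌋·(δ+1)` nodes,
and in particular at least `(t-1)·δ/3` nodes. -/
theorem tNeighborhood_lower_bound {V : Type*} [Fintype V]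
    (G : SimpleGraph V) (δ : ℕ) (hδ : ∀ v : V, δ ≤ G.degree v)
    (v : V) (t : ℕ) (hne : ∃ u : V, G.edist v u = (t : ℕ∞)) :
    ((t + 1) / 3) * (δ + 1) ≤
      (Finset.univ.filter fun u => G.edist v u ≤ (t : ℕ∞)).card ∧
    ((t : ℝ) - 1) * (δ : ℝ) / 3 ≤
      ((Finset.univ.filter fun u => G.edist v u ≤ (t : ℕ∞)).card : ℝ) := by
  obtain ⟨u, hu⟩ := hne
  set m := (t + 1) / 3 with hm
  set B := (Finset.univ.filter fun u => G.edist v u ≤ (t : ℕ∞)) with hB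
  have key : m * (δ + 1) ≤ B.card := by
    -- choose vertices at distance 3k for k < m
    have hch : ∀ k : ℕ, k < m → ∃ w : V, G.edist v w = ((3 * k : ℕ) : ℕ∞) := by
      intro k hk
      have h3k : 3 * k ≤ t := by omega
      obtain ⟨w, hw, -⟩ := exists_intermediate_edist G hu h3k
      exact ⟨w, hw⟩
    choose w hw using hch
    set N : ∀ k : ℕ, k < m → Finset V :=
      fun k hk => Finset.univ.filter fun x => G.edist (w k hk) x ≤ 1 with hN
    have hcard : ∀ k (hk : k < m), δ + 1 ≤ (N k hk).card := by
      intro k hk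
      have hsub : insert (w k hk) (G.neighborFinset (w k hk)) ⊆ N k hk := by
        intro x hx
        simp only [mem_insert, SimpleGraph.mem_neighborFinset] at hx
        simp only [hN, mem_filter, mem_univ, true_and]
        rcases hx with rfl | hx
        · simp [G.edist_self]
        · exact le_of_eq (SimpleGraph.edist_eq_one_iff_adj.mpr hx)
      calc δ + 1 ≤ G.degree (w k hk) + 1 := by have := hδ (w k hk); omega
        _ = (insert (w k hk) (G.neighborFinset (w k hk))).card := by
            rw [Finset.card_insert_of_notMem (by simp), SimpleGraph.card_neighborFinset_eq_degree]
        _ ≤ (N k hk).card := Finset.card_le_card hsub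
    have hsubB : ∀ k (hk : k < m), N k hk ⊆ B := by
      intro k hk x hx
      simp only [hN, mem_filter, mem_univ, true_and] at hx
      simp only [hB, mem_filter, mem_univ, true_and]
      calc G.edist v x ≤ G.edist v (w k hk) + G.edist (w k hk) x := G.edist_triangle
        _ ≤ ((3 * k : ℕ) : ℕ∞) + 1 := by rw [hw]; exact add_le_add_right hx _
        _ = ((3 * k + 1 : ℕ) : ℕ∞) := by push_cast; ring
        _ ≤ (t : ℕ∞) := by
            have : 3 * k + 1 ≤ t := by omega
            exact_mod_cast this
    have hdisj : ∀ j (hj : j < m) k (hk : k < m), j ≠ k →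
        Disjoint (N j hj) (N k hk) := by
      intro j hj k hk hjk
      rw [Finset.disjoint_left]
      intro x hxj hxk
      simp only [hN, mem_filter, mem_univ, true_and] at hxj hxk
      have hjkle : G.edist (w j hj) (w k hk) ≤ 2 := by
        calc G.edist (w j hj) (w k hk) ≤ G.edist (w j hj) x + G.edist x (w k hk) :=
              G.edist_triangle
          _ ≤ 1 + 1 := add_le_add hxj (by rwa [G.edist_comm])
          _ = 2 := by norm_num
      have h1 : ((3 * k : ℕ) : ℕ∞) ≤ ((3 * j + 2 : ℕ) : ℕ∞) := by
        calc ((3 * k : ℕ) : ℕ∞) = G.edist v (w k hk) := (hw k hk).symm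
          _ ≤ G.edist v (w j hj) + G.edist (w j hj) (w k hk) := G.edist_triangle
          _ ≤ ((3 * j : ℕ) : ℕ∞) + 2 := by rw [hw]; exact add_le_add_right hjkle _
          _ = ((3 * j + 2 : ℕ) : ℕ∞) := by push_cast; ring
      have h2 : ((3 * j : ℕ) : ℕ∞) ≤ ((3 * k + 2 : ℕ) : ℕ∞) := by
        calc ((3 * j : ℕ) : ℕ∞) = G.edist v (w j hj) := (hw j hj).symm
          _ ≤ G.edist v (w k hk) + G.edist (w k hk) (w j hj) := G.edist_triangle
          _ ≤ ((3 * k : ℕ) : ℕ∞) + 2 := by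
              rw [hw, G.edist_comm]; exact add_le_add_right hjkle _
          _ = ((3 * k + 2 : ℕ) : ℕ∞) := by push_cast; ring
      have h1' : 3 * k ≤ 3 * j + 2 := by exact_mod_cast h1
      have h2' : 3 * j ≤ 3 * k + 2 := by exact_mod_cast h2
      omega
    -- sum over attach of range m
    classical
    set U := (Finset.range m).attach.biUnion
      (fun k => N k.1 (Finset.mem_range.mp k.2)) with hU
    have hUB : U ⊆ B := Finset.biUnion_subset.mpr fun k _ => hsubB k.1 _
    have hUcard : U.card = ∑ k ∈ (Finset.range m).attach,
        (N k.1 (Finset.mem_range.mp k.2)).card := by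
      rw [hU]
      apply Finset.card_biUnion
      intro j _ k _ hjk
      exact hdisj j _ k _ (fun h => hjk (Subtype.ext h))
    calc m * (δ + 1) = ∑ _k ∈ (Finset.range m).attach, (δ + 1) := by
          rw [Finset.sum_const, Finset.card_attach, Finset.card_range, smul_eq_mul]
      _ ≤ ∑ k ∈ (Finset.range m).attach, (N k.1 (Finset.mem_range.mp k.2)).card :=
          Finset.sum_le_sum fun k _ => hcard k.1 _
      _ = U.card := hUcard.symm
      _ ≤ B.card := Finset.card_le_card hUB
  refine ⟨key, ?_⟩
  have h1 : (m * (δ + 1) : ℝ) ≤ (B.card : ℝ) := by exact_mod_cast key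
  have h2 : t + 1 ≤ 3 * m + 2 := by omega
  have h2' : (t : ℝ) + 1 ≤ 3 * (m : ℝ) + 2 := by exact_mod_cast h2
  have hδ0 : (0 : ℝ) ≤ (δ : ℝ) := Nat.cast_nonneg _
  have hm0 : (0 : ℝ) ≤ (m : ℝ) := Nat.cast_nonneg _
  nlinarith
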